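/- Let N ∈ {3,4}, let U_n be the truncated Aubin–Talenti bubbles, and set K_N := ∫_{ℝ^N} |∇U(x)|² dx, where U(x) := A_N (1+|x|²)^{−(N−2)/2} is the full Aubin–Talenti bubble. Then there exists C > 0 such that for all integers n ≥ 1, |∫_{ℝ^N} |∇U_n(x)|² dx − K_N| ≤ C · n^{−(N−2)}. -/

import Mathlib

open Real MeasureTheory

/-- The radial profile of the truncated Aubin–Talenti bubble. -/
noncomputable def bubbleProfile (N n : ℕ) (r : ℝ) : ℝ :=
  if r < 1 then
    ((N : ℝ) * ((N : ℝ) - 2)) ^ (((N : ℝ) - 2) / 4)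
      * ((n : ℝ) / (1 + (n : ℝ) ^ 2 * r ^ 2)) ^ (((N : ℝ) - 2) / 2)
  else if r < 2 then
    ((N : ℝ) * ((N : ℝ) - 2)) ^ (((N : ℝ) - 2) / 4)
      * ((n : ℝ) / (1 + (n : ℝ) ^ 2)) ^ (((N : ℝ) - 2) / 2) * (2 - r)
  else 0

/-- The truncated Aubin–Talenti bubble `U_n` on `ℝ^N`. -/
noncomputable def Ubub (N n : ℕ) (x : EuclideanSpace ℝ (Fin N)) : ℝ :=
  bubbleProfile N n ‖x‖

/-- The full Aubin–Talenti bubble `U(x) = A_N (1+|x|²)^{-(N-2)/2}` on `ℝ^N`. -/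
noncomputable def Ufull (N : ℕ) (x : EuclideanSpace ℝ (Fin N)) : ℝ :=
  ((N : ℝ) * ((N : ℝ) - 2)) ^ (((N : ℝ) - 2) / 4)
    * (1 + ‖x‖ ^ 2) ^ (-(((N : ℝ) - 2) / 2))

set_option synthInstance.maxHeartbeats 400000
set_option maxHeartbeats 1000000
set_option linter.unusedTactic false
set_option linter.deprecated false

noncomputable def st8cA (N : ℕ) : ℝ := ((N : ℝ) * ((N : ℝ) - 2)) ^ (((N : ℝ) - 2) / 4)
noncomputable def st8p (N : ℕ) : ℝ := ((N : ℝ) - 2) / 2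
noncomputable def st8Dfull (N : ℕ) (r : ℝ) : ℝ :=
  st8cA N * (-(st8p N) * (1 + r ^ 2) ^ (-(st8p N) - 1) * (2 * r))
noncomputable def st8Dbub (N n : ℕ) (r : ℝ) : ℝ :=
  st8cA N * (n : ℝ) ^ (st8p N)
    * (-(st8p N) * (1 + (n : ℝ) ^ 2 * r ^ 2) ^ (-(st8p N) - 1) * ((n : ℝ) ^ 2 * (2 * r)))
noncomputable def st8Cann (N n : ℕ) : ℝ := st8cA N * ((n : ℝ) / (1 + (n : ℝ) ^ 2)) ^ (st8p N)
noncomputable def st8radBub (N n : ℕ) (r : ℝ) : ℝ :=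
  if r < 1 then (st8Dbub N n r) ^ 2 else if r < 2 then (st8Cann N n) ^ 2 else 0
noncomputable def st8radFull (N : ℕ) (r : ℝ) : ℝ := (st8Dfull N r) ^ 2
noncomputable def st8g (N : ℕ) (s : ℝ) : ℝ :=
  (st8cA N) ^ 2 * ((N : ℝ) - 2) ^ 2 * (s ^ (N + 1) * (1 + s ^ 2) ^ (-(N : ℝ)))

lemma st8_hasDerivAt_full (N : ℕ) (r : ℝ) :
    HasDerivAt (fun t : ℝ => st8cA N * (1 + t ^ 2) ^ (-(st8p N))) (st8Dfull N r) r := by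
  have h1 : HasDerivAt (fun t : ℝ => 1 + t ^ 2) (2 * r) r := by
    convert (hasDerivAt_pow 2 r).const_add 1 using 1
    · rfl
    · rfl
    push_cast; ring
  have h2 := h1.rpow_const (p := -(st8p N)) (Or.inl (by positivity))
  convert h2.const_mul (st8cA N) using 1
  · rfl
  · rfl
  simp only [st8Dfull]; ring

lemma st8_bubble_deriv1 (N n : ℕ) {r : ℝ} (hr : r < 1) :
    HasDerivAt (bubbleProfile N n) (st8Dbub N n r) r := by
  have h1 : HasDerivAt (fun t : ℝ => 1 + (n : ℝ) ^ 2 * t ^ 2) ((n : ℝ) ^ 2 * (2 * r)) r := by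
    convert ((hasDerivAt_pow 2 r).const_mul ((n : ℝ) ^ 2)).const_add 1 using 1
    · rfl
    · rfl
    push_cast; ring
  have h2 := h1.rpow_const (p := -(st8p N)) (Or.inl (by positivity))
  have hd := h2.const_mul (st8cA N * (n : ℝ) ^ (st8p N))
  have hDb : HasDerivAt (fun t : ℝ => st8cA N * (n : ℝ) ^ (st8p N)
      * (1 + (n : ℝ) ^ 2 * t ^ 2) ^ (-(st8p N))) (st8Dbub N n r) r := by
    convert hd using 1
    · rfl
    · rfl
    simp only [st8Dbub]; ring
  apply hDb.congr_of_eventuallyEq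
  filter_upwards [Iio_mem_nhds hr] with t ht
  have hpos : (0 : ℝ) < 1 + (n : ℝ) ^ 2 * t ^ 2 := by positivity
  rw [bubbleProfile, if_pos (show t < 1 from ht)]
  simp only [st8cA, st8p]
  rw [Real.div_rpow (Nat.cast_nonneg n) hpos.le, Real.rpow_neg hpos.le, div_eq_mul_inv]
  ring

lemma st8_bubble_deriv2 (N n : ℕ) {r : ℝ} (hr1 : 1 < r) (hr2 : r < 2) :
    HasDerivAt (bubbleProfile N n) (-(st8Cann N n)) r := by
  have hd : HasDerivAt (fun t : ℝ => st8Cann N n * (2 - t)) (-(st8Cann N n)) r := by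
    simpa using ((hasDerivAt_const r (2:ℝ)).sub (hasDerivAt_id r)).const_mul (st8Cann N n)
  apply hd.congr_of_eventuallyEq
  filter_upwards [Ioo_mem_nhds hr1 hr2] with t ht
  rw [bubbleProfile, if_neg (by linarith [ht.1]), if_pos ht.2]
  simp only [st8Cann, st8cA, st8p]

lemma st8_bubble_deriv3 (N n : ℕ) {r : ℝ} (hr : 2 < r) :
    HasDerivAt (bubbleProfile N n) 0 r := by
  apply (hasDerivAt_const r (0:ℝ)).congr_of_eventuallyEq
  filter_upwards [Ioi_mem_nhds hr] with t ht
  have h2 : (2:ℝ) < t := ht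
  rw [bubbleProfile, if_neg (by linarith), if_neg (by linarith)]


lemma st8_fderiv_radial {E : Type*} [NormedAddCommGroup E] [InnerProductSpace ℝ E]
    {g : ℝ → ℝ} {d : ℝ} {x : E} (hx : x ≠ 0) (hg : HasDerivAt g d ‖x‖) :
    HasFDerivAt (fun y => g ‖y‖) (d • (‖x‖⁻¹ • (innerSL ℝ x : E →L[ℝ] ℝ))) x := by
  have hn : ‖x‖ ≠ 0 := norm_ne_zero_iff.mpr hx
  have hsq : HasFDerivAt (fun y : E => ‖y‖ ^ 2) ((2 : ℕ) • innerSL ℝ x) x :=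
    (hasStrictFDerivAt_norm_sq x).hasFDerivAt
  have hsqrt : HasDerivAt Real.sqrt (1 / (2 * Real.sqrt (‖x‖ ^ 2))) (‖x‖ ^ 2) :=
    Real.hasDerivAt_sqrt (pow_ne_zero 2 hn)
  have h1 : HasFDerivAt (fun y : E => Real.sqrt (‖y‖ ^ 2))
      ((1 / (2 * Real.sqrt (‖x‖ ^ 2))) • ((2 : ℕ) • innerSL ℝ x)) x :=
    hsqrt.comp_hasFDerivAt x hsq
  have hfun : (fun y : E => Real.sqrt (‖y‖ ^ 2)) = fun y : E => ‖y‖ :=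
    funext fun y => Real.sqrt_sq (norm_nonneg y)
  rw [hfun] at h1
  have h2 : ((1 / (2 * Real.sqrt (‖x‖ ^ 2))) • ((2 : ℕ) • innerSL ℝ x)) =
      (‖x‖⁻¹ • (innerSL ℝ x : E →L[ℝ] ℝ)) := by
    rw [Real.sqrt_sq (norm_nonneg x), ← Nat.cast_smul_eq_nsmul ℝ, smul_smul]
    congr 1
    field_simp
    norm_num
  rw [h2] at h1
  exact hg.comp_hasFDerivAt x h1

lemma st8_norm_radial {E : Type*} [NormedAddCommGroup E] [InnerProductSpace ℝ E]
    {d : ℝ} {x : E} (hx : x ≠ 0) :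
    ‖d • (‖x‖⁻¹ • (innerSL ℝ x : E →L[ℝ] ℝ))‖ = |d| := by
  have hn : ‖x‖ ≠ 0 := norm_ne_zero_iff.mpr hx
  rw [norm_smul d (‖x‖⁻¹ • (innerSL ℝ x : E →L[ℝ] ℝ)), norm_smul (‖x‖⁻¹) (innerSL ℝ x : E →L[ℝ] ℝ),
    innerSL_apply_norm, Real.norm_eq_abs, Real.norm_eq_abs,
    abs_inv, abs_norm, inv_mul_cancel₀ hn, mul_one]

lemma st8_fderiv_bub_sq (N n : ℕ) {x : EuclideanSpace ℝ (Fin N)} (hx : x ≠ 0)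
    (h1 : ‖x‖ ≠ 1) (h2 : ‖x‖ ≠ 2) :
    ‖fderiv ℝ (Ubub N n) x‖ ^ 2 = st8radBub N n ‖x‖ := by
  have hUb : Ubub N n = fun y : EuclideanSpace ℝ (Fin N) => bubbleProfile N n ‖y‖ := rfl
  rcases lt_or_gt_of_ne h1 with hlt1 | hgt1
  · have hd := st8_fderiv_radial hx (st8_bubble_deriv1 N n hlt1)
    rw [hUb, hd.fderiv, st8_norm_radial hx, sq_abs, st8radBub, if_pos hlt1]
  · rcases lt_or_gt_of_ne h2 with hlt2 | hgt2
    · have hd := st8_fderiv_radial hx (st8_bubble_deriv2 N n hgt1 hlt2)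
      rw [hUb, hd.fderiv, st8_norm_radial hx, sq_abs, st8radBub,
        if_neg (by linarith), if_pos hlt2, neg_pow]
      ring
    · have hd := st8_fderiv_radial hx (st8_bubble_deriv3 N n hgt2)
      rw [hUb, hd.fderiv, st8_norm_radial hx, st8radBub,
        if_neg (by linarith), if_neg (by linarith)]
      simp

lemma st8_fderiv_full_sq (N : ℕ) (x : EuclideanSpace ℝ (Fin N)) :
    ‖fderiv ℝ (Ufull N) x‖ ^ 2 = st8radFull N ‖x‖ := by
  have hφ : HasDerivAt (fun t : ℝ => st8cA N * (1 + t) ^ (-(st8p N)))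
      (st8cA N * (-(st8p N) * (1 + ‖x‖ ^ 2) ^ (-(st8p N) - 1))) (‖x‖ ^ 2) := by
    have h1 : HasDerivAt (fun t : ℝ => 1 + t) 1 (‖x‖ ^ 2) := by
      simpa using (hasDerivAt_id (‖x‖ ^ 2)).const_add (1:ℝ)
    have h2 := h1.rpow_const (p := -(st8p N)) (Or.inl (by positivity))
    convert h2.const_mul (st8cA N) using 1
    · rfl
    · rfl
    ring
  have hsq : HasFDerivAt (fun y : EuclideanSpace ℝ (Fin N) => ‖y‖ ^ 2)
      ((2 : ℕ) • innerSL ℝ x) x := (hasStrictFDerivAt_norm_sq x).hasFDerivAt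
  have hcomp : HasFDerivAt (fun y : EuclideanSpace ℝ (Fin N) =>
      (fun t : ℝ => st8cA N * (1 + t) ^ (-(st8p N))) (‖y‖ ^ 2))
      ((st8cA N * (-(st8p N) * (1 + ‖x‖ ^ 2) ^ (-(st8p N) - 1))) • ((2:ℕ) • innerSL ℝ x)) x :=
    hφ.comp_hasFDerivAt (f := fun y : EuclideanSpace ℝ (Fin N) => ‖y‖ ^ 2) x hsq
  have hUf : Ufull N = fun y : EuclideanSpace ℝ (Fin N) =>
      (fun t : ℝ => st8cA N * (1 + t) ^ (-(st8p N))) (‖y‖ ^ 2) := rfl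
  rw [hUf, hcomp.fderiv]
  rw [norm_smul, ← Nat.cast_smul_eq_nsmul ℝ,
    norm_smul ((2:ℕ):ℝ) (innerSL ℝ x : EuclideanSpace ℝ (Fin N) →L[ℝ] ℝ), innerSL_apply_norm]
  simp only [Real.norm_eq_abs, Nat.cast_ofNat, st8radFull, st8Dfull]
  rw [mul_pow, sq_abs, mul_pow, abs_two]
  ring

lemma st8_int_radial (N : ℕ) (h3 : 3 ≤ N) (F : EuclideanSpace ℝ (Fin N) → ℝ) (rad : ℝ → ℝ)
    (hae : ∀ x : EuclideanSpace ℝ (Fin N), x ≠ 0 → ‖x‖ ≠ 1 → ‖x‖ ≠ 2 → F x = rad ‖x‖) :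
    ∫ x : EuclideanSpace ℝ (Fin N), F x
      = N • (volume (Metric.ball (0 : EuclideanSpace ℝ (Fin N)) 1)).toReal
        • ∫ y in Set.Ioi (0:ℝ), y ^ (N - 1) • rad y := by
  haveI : Nonempty (Fin N) := ⟨⟨0, by omega⟩⟩
  haveI : Nontrivial (EuclideanSpace ℝ (Fin N)) := inferInstance
  have h0 : volume (Metric.sphere (0 : EuclideanSpace ℝ (Fin N)) 0
      ∪ (Metric.sphere (0 : EuclideanSpace ℝ (Fin N)) 1
        ∪ Metric.sphere (0 : EuclideanSpace ℝ (Fin N)) 2)) = 0 :=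
    measure_union_null (Measure.addHaar_sphere volume 0 0)
      (measure_union_null (Measure.addHaar_sphere volume 0 1) (Measure.addHaar_sphere volume 0 2))
  have hc : ∀ᵐ x : EuclideanSpace ℝ (Fin N), x ∉ (Metric.sphere (0 : EuclideanSpace ℝ (Fin N)) 0
      ∪ (Metric.sphere (0 : EuclideanSpace ℝ (Fin N)) 1
        ∪ Metric.sphere (0 : EuclideanSpace ℝ (Fin N)) 2)) :=
    (MeasureTheory.measure_eq_zero_iff_ae_notMem).mp h0
  have hFr : ∫ x : EuclideanSpace ℝ (Fin N), F x
      = ∫ x : EuclideanSpace ℝ (Fin N), rad ‖x‖ := by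
    refine integral_congr_ae ?_
    filter_upwards [hc] with x hx
    simp only [Set.mem_union, not_or, mem_sphere_zero_iff_norm] at hx
    exact hae x (by simpa [norm_eq_zero] using hx.1) hx.2.1 hx.2.2
  rw [hFr, integral_fun_norm_addHaar volume rad, finrank_euclideanSpace_fin]
  rfl

lemma st8_rpow_sq {T : ℝ} (hT : 0 < T) (a : ℝ) : (T ^ a) ^ 2 = T ^ (2 * a) := by
  rw [sq, ← Real.rpow_add hT, two_mul]

lemma st8_g_cont (N : ℕ) : Continuous (st8g N) := by
  unfold st8g
  exact continuous_const.mul ((continuous_pow (N+1)).mul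
    ((continuous_const.add (continuous_pow 2)).rpow_const (fun x => Or.inl (by simp only [Pi.add_apply]; positivity))))

lemma st8_g_nonneg (N : ℕ) {s : ℝ} (hs : 0 ≤ s) : 0 ≤ st8g N s := by
  unfold st8g
  apply mul_nonneg (by positivity)
  exact mul_nonneg (pow_nonneg hs _) (Real.rpow_nonneg (by positivity) _)

lemma st8_g_le (N : ℕ) {s : ℝ} (hs : 1 ≤ s) :
    st8g N s ≤ (st8cA N) ^ 2 * ((N : ℝ) - 2) ^ 2 * s ^ ((1 : ℝ) - N) := by
  have hs0 : (0 : ℝ) < s := lt_of_lt_of_le zero_lt_one hs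
  have h1 : (1 + s ^ 2) ^ (-(N : ℝ)) ≤ (s ^ 2) ^ (-(N : ℝ)) :=
    Real.rpow_le_rpow_of_nonpos (by positivity) (by nlinarith)
      (neg_nonpos.mpr (Nat.cast_nonneg N))
  have h2 : ((s ^ 2 : ℝ)) ^ (-(N : ℝ)) = s ^ (-(2 * (N : ℝ))) := by
    rw [← Real.rpow_natCast s 2, ← Real.rpow_mul hs0.le]
    norm_num
  have h3 : (s : ℝ) ^ (N + 1) = s ^ (((N : ℝ)) + 1) := by
    rw [← Real.rpow_natCast s (N + 1)]
    push_cast; ring_nf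
  have h4 : s ^ (((N : ℝ)) + 1) * s ^ (-(2 * (N : ℝ))) = s ^ ((1 : ℝ) - N) := by
    rw [← Real.rpow_add hs0]; ring_nf
  calc st8g N s = (st8cA N) ^ 2 * ((N : ℝ) - 2) ^ 2 * (s ^ (N+1) * (1 + s ^ 2) ^ (-(N:ℝ))) := rfl
    _ ≤ (st8cA N) ^ 2 * ((N : ℝ) - 2) ^ 2 * (s ^ (N+1) * (s ^ 2) ^ (-(N:ℝ))) := by
        apply mul_le_mul_of_nonneg_left _ (by positivity)
        exact mul_le_mul_of_nonneg_left h1 (pow_nonneg hs0.le _)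
    _ = (st8cA N) ^ 2 * ((N : ℝ) - 2) ^ 2 * s ^ ((1 : ℝ) - N) := by
        rw [h2, h3, h4]

lemma st8_piece_full (N : ℕ) (h3 : 3 ≤ N) {y : ℝ} (hy0 : 0 < y) :
    y ^ (N - 1) * st8radFull N y = st8g N y := by
  obtain ⟨k, rfl⟩ : ∃ k, N = k + 3 := ⟨N - 3, by omega⟩
  have hT : (0:ℝ) < 1 + y ^ 2 := by positivity
  rw [st8radFull, st8Dfull, st8g]
  rw [show (k + 3 - 1) = k + 2 from rfl]
  rw [mul_pow, mul_pow, mul_pow, st8_rpow_sq hT,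
    show 2 * (-(st8p (k+3)) - 1) = -(((k+3:ℕ)):ℝ) by simp [st8p]; push_cast; ring]
  rw [show ((-(st8p (k+3)))^2 : ℝ) = ((((k+3:ℕ)):ℝ) - 2)^2 / 4 by simp [st8p]; push_cast; ring]
  ring

lemma st8_piece_bub (N n : ℕ) (h3 : 3 ≤ N) (hn : 1 ≤ n) {y : ℝ} (hy0 : 0 < y) (hy1 : y < 1) :
    y ^ (N - 1) * st8radBub N n y = (n : ℝ) * st8g N ((n : ℝ) * y) := by
  obtain ⟨k, rfl⟩ : ∃ k, N = k + 3 := ⟨N - 3, by omega⟩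
  have hm0 : (0:ℝ) < (n : ℝ) := by exact_mod_cast hn
  have hT : (0:ℝ) < 1 + (n:ℝ) ^ 2 * y ^ 2 := by positivity
  rw [st8radBub, if_pos hy1, st8Dbub, st8g]
  rw [show (k + 3 - 1) = k + 2 from rfl]
  rw [mul_pow (n:ℝ) y 2, mul_pow (n:ℝ) y (k+3+1)]
  rw [mul_pow, mul_pow, mul_pow, mul_pow, st8_rpow_sq hT,
    show 2 * (-(st8p (k+3)) - 1) = -(((k+3:ℕ)):ℝ) by simp [st8p]; push_cast; ring]
  rw [st8_rpow_sq hm0, show 2 * (st8p (k+3)) = (((k+1:ℕ)):ℝ) by simp [st8p]; push_cast; ring,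
    Real.rpow_natCast]
  rw [show ((-(st8p (k+3)))^2 : ℝ) = ((((k+3:ℕ)):ℝ) - 2)^2 / 4 by simp [st8p]; push_cast; ring]
  ring

lemma st8_oned (N n : ℕ) (h3 : 3 ≤ N) (hn : 1 ≤ n) :
    |(∫ y in Set.Ioi (0:ℝ), y ^ (N - 1) * st8radBub N n y) -
      ∫ y in Set.Ioi (0:ℝ), y ^ (N - 1) * st8radFull N y|
      ≤ ((st8cA N) ^ 2 * ((N : ℝ) - 2) ^ 2 + (st8cA N) ^ 2 * 2 ^ (N - 1))
        * (n : ℝ) ^ (-((N : ℝ) - 2)) := by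
  have hm0 : (0:ℝ) < (n : ℝ) := by exact_mod_cast hn
  have hm1 : (1:ℝ) ≤ (n : ℝ) := by exact_mod_cast hn
  have hN3 : (3:ℝ) ≤ (N : ℝ) := by exact_mod_cast h3
  have hgc := st8_g_cont N
  set c : ℝ := (st8cA N) ^ 2 * ((N : ℝ) - 2) ^ 2 with hc
  have hc0 : 0 ≤ c := by positivity
  -- integrability of st8g
  have hgI1 : IntegrableOn (st8g N) (Set.Ioi (1:ℝ)) volume := by
    refine Integrable.mono' ((integrableOn_Ioi_rpow_of_lt (a := (1:ℝ) - N) (by linarith) zero_lt_one).const_mul c)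
      hgc.aestronglyMeasurable.restrict ?_
    filter_upwards [ae_restrict_mem measurableSet_Ioi] with s hs
    have hs1 : (1:ℝ) < s := hs
    rw [Real.norm_eq_abs, abs_of_nonneg (st8_g_nonneg N (by linarith))]
    exact st8_g_le N hs1.le
  have hgIoc : ∀ b : ℝ, IntegrableOn (st8g N) (Set.Ioc 0 b) volume := fun b =>
    (hgc.continuousOn.integrableOn_Icc).mono_set Set.Ioc_subset_Icc_self
  have hgIoim : IntegrableOn (st8g N) (Set.Ioi ((n:ℝ))) volume :=
    hgI1.mono_set (Set.Ioi_subset_Ioi hm1)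
  -- splitting of the full integral
  have hIfull : ∫ y in Set.Ioi (0:ℝ), y ^ (N - 1) * st8radFull N y
      = (∫ y in Set.Ioc 0 ((n:ℝ)), st8g N y) + ∫ y in Set.Ioi ((n:ℝ)), st8g N y := by
    rw [setIntegral_congr_fun measurableSet_Ioi
      (fun y (hy : 0 < y) => st8_piece_full N h3 hy),
      ← setIntegral_union (Set.Ioc_disjoint_Ioi le_rfl) measurableSet_Ioi (hgIoc _) hgIoim,
      Set.Ioc_union_Ioi_eq_Ioi hm0.le]
  -- the bubble integral
  have hann : ∀ y ∈ Set.Ico (1:ℝ) 2, y ^ (N-1) * st8radBub N n y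
      = (st8Cann N n) ^ 2 * y ^ (N-1) := by
    intro y hy
    rw [st8radBub, if_neg (by simpa using hy.1), if_pos hy.2]
    ring
  have hBann : IntegrableOn (fun y => y ^ (N-1) * st8radBub N n y) (Set.Ico (1:ℝ) 2) volume := by
    refine IntegrableOn.congr_fun ?_ (fun y hy => (hann y hy).symm) measurableSet_Ico
    exact ((continuous_const.mul (continuous_pow (N-1))).continuousOn.integrableOn_Icc).mono_set
      Set.Ico_subset_Icc_self
  have hBoo : IntegrableOn (fun y => y ^ (N-1) * st8radBub N n y) (Set.Ioo (0:ℝ) 1) volume := by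
    refine IntegrableOn.congr_fun ?_
      (fun y hy => ((st8_piece_bub N n h3 hn hy.1 hy.2).symm : _)) measurableSet_Ioo
    exact ((continuous_const.mul (hgc.comp
      (continuous_const.mul continuous_id))).continuousOn.integrableOn_Icc).mono_set
      Set.Ioo_subset_Icc_self
  have hBci : IntegrableOn (fun y => y ^ (N-1) * st8radBub N n y) (Set.Ici (2:ℝ)) volume := by
    refine IntegrableOn.congr_fun (integrableOn_zero) ?_ measurableSet_Ici
    intro y hy
    have h2y : (2:ℝ) ≤ y := hy
    simp [st8radBub, if_neg, not_lt.mpr (by linarith : (1:ℝ) ≤ y), not_lt.mpr h2y]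
  -- value over Ioo 0 1
  have hval1 : ∫ y in Set.Ioo (0:ℝ) 1, y ^ (N-1) * st8radBub N n y
      = ∫ y in Set.Ioc 0 ((n:ℝ)), st8g N y := by
    rw [setIntegral_congr_fun measurableSet_Ioo
      (fun y hy => st8_piece_bub N n h3 hn hy.1 hy.2)]
    rw [← integral_Ioc_eq_integral_Ioo, ← intervalIntegral.integral_of_le zero_le_one]
    rw [intervalIntegral.integral_const_mul]
    rw [intervalIntegral.integral_comp_mul_left (st8g N) hm0.ne']
    rw [mul_zero, mul_one, smul_eq_mul, ← mul_assoc, mul_inv_cancel₀ hm0.ne', one_mul]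
    exact intervalIntegral.integral_of_le hm0.le
  -- value over Ico 1 2
  have hval2 : ∫ y in Set.Ico (1:ℝ) 2, y ^ (N-1) * st8radBub N n y
      = (st8Cann N n) ^ 2 * ∫ y in Set.Ico (1:ℝ) 2, y ^ (N-1) := by
    rw [setIntegral_congr_fun measurableSet_Ico hann, integral_const_mul]
  -- value over Ici 2
  have hval3 : ∫ y in Set.Ici (2:ℝ), y ^ (N-1) * st8radBub N n y = 0 := by
    rw [setIntegral_congr_fun measurableSet_Ici (fun y (hy : 2 ≤ y) => ?_), integral_zero]
    show y ^ (N-1) * st8radBub N n y = 0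
    simp [st8radBub, if_neg, not_lt.mpr (by linarith : (1:ℝ) ≤ y), not_lt.mpr hy]
  -- splitting of the bubble integral
  have hIbub : ∫ y in Set.Ioi (0:ℝ), y ^ (N - 1) * st8radBub N n y
      = (∫ y in Set.Ioc 0 ((n:ℝ)), st8g N y)
        + (st8Cann N n) ^ 2 * ∫ y in Set.Ico (1:ℝ) 2, y ^ (N-1) := by
    have hd1 : Disjoint (Set.Ioo (0:ℝ) 1) (Set.Ico 1 2) := by
      rw [Set.disjoint_left]; rintro y ⟨_, h1⟩ ⟨h2, _⟩; linarith
    have hd2 : Disjoint (Set.Ioo (0:ℝ) 2) (Set.Ici 2) := by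
      rw [Set.disjoint_left]; rintro y ⟨_, h1⟩ h2
      exact absurd h1 (not_lt.mpr h2)
    have hu1 : Set.Ioo (0:ℝ) 1 ∪ Set.Ico 1 2 = Set.Ioo 0 2 :=
      Set.Ioo_union_Ico_eq_Ioo zero_lt_one one_le_two
    have hu2 : Set.Ioo (0:ℝ) 2 ∪ Set.Ici 2 = Set.Ioi 0 :=
      Set.Ioo_union_Ici_eq_Ioi (by norm_num)
    rw [← hu2, setIntegral_union hd2 measurableSet_Ici (by rw [← hu1]; exact hBoo.union hBann)
      hBci, ← hu1, setIntegral_union hd1 measurableSet_Ico hBoo hBann]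
    rw [hval1, hval2, hval3, add_zero]
  -- annulus bound pieces
  have hB0 : 0 ≤ ∫ y in Set.Ico (1:ℝ) 2, y ^ (N-1) :=
    setIntegral_nonneg measurableSet_Ico (fun y hy => pow_nonneg (by linarith [hy.1]) _)
  have hBle : ∫ y in Set.Ico (1:ℝ) 2, (y:ℝ) ^ (N-1) ≤ 2 ^ (N-1) := by
    have : ∫ y in Set.Ico (1:ℝ) 2, (y:ℝ) ^ (N-1)
        ≤ ∫ _ in Set.Ico (1:ℝ) 2, (2:ℝ) ^ (N-1) := by
      refine setIntegral_mono_on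
        (((continuous_pow (N-1)).continuousOn.integrableOn_Icc).mono_set Set.Ico_subset_Icc_self)
        (integrableOn_const (by rw [Real.volume_Ico]; exact ENNReal.ofReal_ne_top))
        measurableSet_Ico (fun y hy => ?_)
      exact pow_le_pow_left₀ (by linarith [hy.1]) (le_of_lt hy.2) _
    calc ∫ y in Set.Ico (1:ℝ) 2, (y:ℝ) ^ (N-1) ≤ ∫ _ in Set.Ico (1:ℝ) 2, (2:ℝ) ^ (N-1) := this
      _ = 2 ^ (N-1) := by
          rw [setIntegral_const, Real.volume_real_Ico, smul_eq_mul]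
          norm_num
  have hCann : (st8Cann N n) ^ 2 ≤ (st8cA N) ^ 2 * (n:ℝ) ^ (-((N:ℝ) - 2)) := by
    have hb0 : (0:ℝ) < (n:ℝ) / (1 + (n:ℝ)^2) := by positivity
    have hble : (n:ℝ) / (1 + (n:ℝ)^2) ≤ ((n:ℝ))⁻¹ := by
      rw [div_le_iff₀ (by positivity), inv_mul_eq_div, le_div_iff₀ hm0]
      nlinarith
    rw [st8Cann, mul_pow, st8_rpow_sq hb0,
      show 2 * st8p N = (N:ℝ) - 2 by simp [st8p]; ring]
    apply mul_le_mul_of_nonneg_left _ (by positivity)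
    calc ((n:ℝ) / (1 + (n:ℝ)^2)) ^ ((N:ℝ) - 2) ≤ (((n:ℝ))⁻¹) ^ ((N:ℝ) - 2) :=
          Real.rpow_le_rpow hb0.le hble (by linarith)
      _ = (n:ℝ) ^ (-((N:ℝ) - 2)) := by
          rw [← Real.rpow_neg_one (n:ℝ), ← Real.rpow_mul hm0.le,
            show (-1:ℝ) * ((N:ℝ) - 2) = -((N:ℝ) - 2) by ring]
  -- tail bound
  have htail0 : 0 ≤ ∫ y in Set.Ioi ((n:ℝ)), st8g N y :=
    setIntegral_nonneg measurableSet_Ioi (fun y hy => st8_g_nonneg N (by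
      have : (n:ℝ) < y := hy; linarith))
  have htail : ∫ y in Set.Ioi ((n:ℝ)), st8g N y ≤ c * (n:ℝ) ^ (-((N:ℝ) - 2)) := by
    have hmono : ∫ y in Set.Ioi ((n:ℝ)), st8g N y
        ≤ ∫ y in Set.Ioi ((n:ℝ)), c * y ^ ((1:ℝ) - N) := by
      refine setIntegral_mono_on hgIoim
        ((integrableOn_Ioi_rpow_of_lt (by linarith) hm0).const_mul c)
        measurableSet_Ioi (fun y hy => ?_)
      have : (n:ℝ) < y := hy
      exact st8_g_le N (by linarith)
    have hval : ∫ y in Set.Ioi ((n:ℝ)), c * y ^ ((1:ℝ) - N)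
        = c * (-(n:ℝ) ^ (((1:ℝ) - N) + 1) / (((1:ℝ) - N) + 1)) := by
      rw [integral_const_mul, integral_Ioi_rpow_of_lt (by linarith) hm0]
    have hexp : ((1:ℝ) - N) + 1 = -((N:ℝ) - 2) := by ring
    calc ∫ y in Set.Ioi ((n:ℝ)), st8g N y ≤ c * (-(n:ℝ) ^ (((1:ℝ) - N) + 1) / (((1:ℝ) - N) + 1)) :=
          hmono.trans (le_of_eq hval)
      _ = c * ((n:ℝ) ^ (-((N:ℝ) - 2)) / ((N:ℝ) - 2)) := by
          rw [hexp, neg_div_neg_eq]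
      _ ≤ c * (n:ℝ) ^ (-((N:ℝ) - 2)) := by
          apply mul_le_mul_of_nonneg_left _ hc0
          apply div_le_self (Real.rpow_nonneg hm0.le _)
          linarith
  -- put together
  rw [hIbub, hIfull]
  have hkey : ((∫ y in Set.Ioc 0 ((n:ℝ)), st8g N y)
        + (st8Cann N n) ^ 2 * ∫ y in Set.Ico (1:ℝ) 2, y ^ (N-1))
      - ((∫ y in Set.Ioc 0 ((n:ℝ)), st8g N y) + ∫ y in Set.Ioi ((n:ℝ)), st8g N y)
      = (st8Cann N n) ^ 2 * (∫ y in Set.Ico (1:ℝ) 2, y ^ (N-1))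
        - ∫ y in Set.Ioi ((n:ℝ)), st8g N y := by ring
  rw [hkey]
  have h1 : (st8Cann N n) ^ 2 * (∫ y in Set.Ico (1:ℝ) 2, y ^ (N-1))
      ≤ (st8cA N) ^ 2 * 2 ^ (N-1) * (n:ℝ) ^ (-((N:ℝ) - 2)) := by
    calc (st8Cann N n) ^ 2 * (∫ y in Set.Ico (1:ℝ) 2, y ^ (N-1))
        ≤ ((st8cA N) ^ 2 * (n:ℝ) ^ (-((N:ℝ)-2))) * 2 ^ (N-1) :=
          mul_le_mul hCann hBle hB0 (by positivity)
      _ = (st8cA N) ^ 2 * 2 ^ (N-1) * (n:ℝ) ^ (-((N:ℝ) - 2)) := by ring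
  refine (abs_sub _ _).trans ?_
  rw [abs_of_nonneg (mul_nonneg (sq_nonneg _) hB0), abs_of_nonneg htail0]
  calc (st8Cann N n) ^ 2 * (∫ y in Set.Ico (1:ℝ) 2, y ^ (N-1))
        + ∫ y in Set.Ioi ((n:ℝ)), st8g N y
      ≤ (st8cA N) ^ 2 * 2 ^ (N-1) * (n:ℝ) ^ (-((N:ℝ) - 2)) + c * (n:ℝ) ^ (-((N:ℝ) - 2)) :=
        add_le_add h1 htail
    _ = (c + (st8cA N) ^ 2 * 2 ^ (N-1)) * (n:ℝ) ^ (-((N:ℝ) - 2)) := by ring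

theorem stmt_8 (N : ℕ) (hN : N = 3 ∨ N = 4) :
    ∃ C : ℝ, 0 < C ∧ ∀ n : ℕ, 1 ≤ n →
      |(∫ x : EuclideanSpace ℝ (Fin N), ‖fderiv ℝ (Ubub N n) x‖ ^ 2)
          - ∫ x : EuclideanSpace ℝ (Fin N), ‖fderiv ℝ (Ufull N) x‖ ^ 2|
        ≤ C * (n : ℝ) ^ (-((N : ℝ) - 2)) := by
  have h3 : 3 ≤ N := by rcases hN with h | h <;> omega
  set κ : ℝ := (N : ℝ) * (volume (Metric.ball (0 : EuclideanSpace ℝ (Fin N)) 1)).toReal with hκ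
  have hκ0 : 0 ≤ κ := by positivity
  set D : ℝ := (st8cA N) ^ 2 * ((N : ℝ) - 2) ^ 2 + (st8cA N) ^ 2 * 2 ^ (N - 1) with hD
  have hD0 : 0 ≤ D := by positivity
  refine ⟨κ * D + 1, by positivity, fun n hn => ?_⟩
  have hrpos : (0:ℝ) < (n : ℝ) ^ (-((N : ℝ) - 2)) :=
    Real.rpow_pos_of_pos (by exact_mod_cast hn) _
  have hb := st8_int_radial N h3 (fun x => ‖fderiv ℝ (Ubub N n) x‖ ^ 2) (st8radBub N n)
    (fun x hx h1 h2 => st8_fderiv_bub_sq N n hx h1 h2)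
  have hf := st8_int_radial N h3 (fun x => ‖fderiv ℝ (Ufull N) x‖ ^ 2) (st8radFull N)
    (fun x hx _ _ => st8_fderiv_full_sq N x)
  rw [hb, hf]
  simp only [nsmul_eq_mul, smul_eq_mul, ← mul_assoc]
  rw [← mul_sub, abs_mul]
  have habs : |(N : ℝ) * (volume (Metric.ball (0 : EuclideanSpace ℝ (Fin N)) 1)).toReal| = κ := by
    rw [hκ, abs_of_nonneg (by positivity)]
  rw [habs]
  have hone := st8_oned N n h3 hn
  calc κ * |(∫ y in Set.Ioi (0:ℝ), y ^ (N - 1) * st8radBub N n y) -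
        ∫ y in Set.Ioi (0:ℝ), y ^ (N - 1) * st8radFull N y|
      ≤ κ * (D * (n : ℝ) ^ (-((N : ℝ) - 2))) := mul_le_mul_of_nonneg_left hone hκ0
    _ = (κ * D) * (n : ℝ) ^ (-((N : ℝ) - 2)) := by ring
    _ ≤ (κ * D + 1) * (n : ℝ) ^ (-((N : ℝ) - 2)) := by
        apply mul_le_mul_of_nonneg_right (by linarith) hrpos.le
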